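/- Let A ∈ ℝ^{n×N} have full row rank and let σ_max be the largest eigenvalue of AA* (the squared largest singular value of A). If δ is an s-th order RIP constant for A with δ < 1, then for every s-sparse x ∈ ℝ^N one has ‖(AA*)^{-1/2} A x‖₂² ≥ ((1 − δ)/σ_max) ‖x‖₂²; that is, 1 − (1 − δ)/σ_max is an s-th order P-RIP constant for A. -/

import Mathlib

open Matrix Finset Filter Topology

/-- Euclidean norm of a vector. -/
noncomputable def eucNorm {k : ℕ} (x : Fin k → ℝ) : ℝ := Real.sqrt (∑ i, x i ^ 2)

/-- Square root of a positive semidefinite matrix (as in the older Mathlib). -/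
noncomputable def Matrix.PosSemidef.sqrt {n 𝕜 : Type*} [Fintype n] [RCLike 𝕜] [PartialOrder 𝕜] [StarOrderedRing 𝕜]
    [DecidableEq n] {A : Matrix n n 𝕜} (hA : A.PosSemidef) : Matrix n n 𝕜 :=
  hA.1.eigenvectorUnitary.1 * diagonal ((↑) ∘ (√·) ∘ hA.1.eigenvalues) *
    (star hA.1.eigenvectorUnitary : Matrix n n 𝕜)


/-- `x` has at most `s` nonzero entries. -/
def IsSparse {k : ℕ} (s : ℕ) (x : Fin k → ℝ) : Prop :=
  (Finset.univ.filter fun i => x i ≠ 0).card ≤ s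

/-- Spectral norm (ℓ²-operator norm) of a matrix. -/
noncomputable def specNorm {m k : Type*} [Fintype m] [Fintype k] [DecidableEq k]
    (M : Matrix m k ℝ) : ℝ :=
  ‖LinearMap.toContinuousLinearMap (Matrix.toEuclideanLin M)‖

/-- `cols A T` is the submatrix of `A` consisting of the columns indexed by `T`. -/
def cols {n N : ℕ} (A : Matrix (Fin n) (Fin N) ℝ) (T : Finset (Fin N)) :
    Matrix (Fin n) {i : Fin N // i ∈ T} ℝ := Matrix.of fun r c => A r c.1

/-- `subv x T` is the subvector of `x` consisting of the entries indexed by `T`. -/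
def subv {N : ℕ} (x : Fin N → ℝ) (T : Finset (Fin N)) : {i : Fin N // i ∈ T} → ℝ :=
  fun i => x i.1

/-- The feedback term `(A_T* A_T)⁻¹ A_T* A_{Tᶜ} x_{Tᶜ}`. -/
noncomputable def fb {n N : ℕ} (A : Matrix (Fin n) (Fin N) ℝ) (T : Finset (Fin N))
    (x : Fin N → ℝ) : {i : Fin N // i ∈ T} → ℝ :=
  ((cols A T)ᵀ * cols A T)⁻¹ *ᵥ ((cols A T)ᵀ *ᵥ (cols A Tᶜ *ᵥ subv x Tᶜ))

lemma quad_le {k : ℕ} (M : Matrix (Fin k) (Fin k) ℝ) (hM : M.IsHermitian) (σ : ℝ)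
    (h : ∀ i, hM.eigenvalues i ≤ σ) (w : Fin k → ℝ) :
    w ⬝ᵥ (M *ᵥ w) ≤ σ * (w ⬝ᵥ w) := by
  have key : σ • (1 : Matrix (Fin k) (Fin k) ℝ) - M =
      (hM.eigenvectorUnitary : Matrix (Fin k) (Fin k) ℝ) *
        diagonal (fun i => σ - hM.eigenvalues i) *
        star (hM.eigenvectorUnitary : Matrix (Fin k) (Fin k) ℝ) := by
    conv_lhs => rw [hM.spectral_theorem, Unitary.conjStarAlgAut_apply]
    have hU : (hM.eigenvectorUnitary : Matrix (Fin k) (Fin k) ℝ) *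
        star (hM.eigenvectorUnitary : Matrix (Fin k) (Fin k) ℝ) = 1 :=
      (Matrix.mem_unitaryGroup_iff).mp hM.eigenvectorUnitary.2
    have : (diagonal (fun i => σ - hM.eigenvalues i) : Matrix (Fin k) (Fin k) ℝ) =
        σ • 1 - diagonal (RCLike.ofReal ∘ hM.eigenvalues) := by
      rw [smul_one_eq_diagonal, ← diagonal_sub]
      rfl
    rw [this, Matrix.mul_sub, Matrix.sub_mul, Matrix.mul_smul, Matrix.mul_one,
      Matrix.smul_mul, hU]
  have hps : (σ • (1 : Matrix (Fin k) (Fin k) ℝ) - M).PosSemidef := by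
    rw [key]
    exact (posSemidef_diagonal_iff.mpr fun i => sub_nonneg.mpr (h i)).mul_mul_conjTranspose_same _
  have h0 := hps.dotProduct_mulVec_nonneg w
  simp only [star_trivial, RCLike.re_to_real, sub_mulVec, smul_mulVec, one_mulVec,
    dotProduct_sub, dotProduct_smul, smul_eq_mul] at h0
  linarith

lemma enorm_sq' {k : ℕ} (v : Fin k → ℝ) : eucNorm v ^ 2 = v ⬝ᵥ v := by
  rw [eucNorm, Real.sq_sqrt (by positivity)]
  simp [dotProduct, sq]

lemma sqrt_mul_self' {k : ℕ} {M : Matrix (Fin k) (Fin k) ℝ} (hA : M.PosSemidef) :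
    hA.sqrt * hA.sqrt = M := by
  have hU : star (hA.1.eigenvectorUnitary : Matrix (Fin k) (Fin k) ℝ) *
      (hA.1.eigenvectorUnitary : Matrix (Fin k) (Fin k) ℝ) = 1 :=
    (Matrix.mem_unitaryGroup_iff').mp hA.1.eigenvectorUnitary.2
  have hD : (diagonal (RCLike.ofReal ∘ (√·) ∘ hA.1.eigenvalues) : Matrix (Fin k) (Fin k) ℝ) *
      diagonal (RCLike.ofReal ∘ (√·) ∘ hA.1.eigenvalues) = diagonal (RCLike.ofReal ∘ hA.1.eigenvalues) := by
    rw [diagonal_mul_diagonal]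
    congr 1
    funext i
    simp [Real.mul_self_sqrt (hA.eigenvalues_nonneg i)]
  conv_rhs => rw [hA.1.spectral_theorem, Unitary.conjStarAlgAut_apply]
  unfold Matrix.PosSemidef.sqrt
  calc _ = (hA.1.eigenvectorUnitary : Matrix (Fin k) (Fin k) ℝ) *
        (diagonal (RCLike.ofReal ∘ (√·) ∘ hA.1.eigenvalues) *
        (star (hA.1.eigenvectorUnitary : Matrix (Fin k) (Fin k) ℝ) *
        (hA.1.eigenvectorUnitary : Matrix (Fin k) (Fin k) ℝ)) *
        diagonal (RCLike.ofReal ∘ (√·) ∘ hA.1.eigenvalues)) *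
        star (hA.1.eigenvectorUnitary : Matrix (Fin k) (Fin k) ℝ) := by
          simp only [Matrix.mul_assoc]
    _ = _ := by rw [hU, Matrix.mul_one, hD]

lemma sqrt_isHermitian' {k : ℕ} {M : Matrix (Fin k) (Fin k) ℝ} (hA : M.PosSemidef) :
    hA.sqrt.IsHermitian := by
  unfold Matrix.PosSemidef.sqrt
  rw [Matrix.star_eq_conjTranspose]
  exact isHermitian_mul_mul_conjTranspose _ (isHermitian_diagonal_of_self_adjoint _
    (by ext i; simp))

/-- the P-RIP constant is bounded via the RIP constant and the
largest eigenvalue of `AA*`. -/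
theorem stmt_4 {n N s : ℕ} (hnN : n < N) (A : Matrix (Fin n) (Fin N) ℝ)
    (hpd : (A * Aᵀ).PosDef) (σmax : ℝ)
    (hσ₁ : ∀ i, hpd.isHermitian.eigenvalues i ≤ σmax)
    (hσ₂ : ∃ i, hpd.isHermitian.eigenvalues i = σmax)
    (δ : ℝ) (hδ0 : 0 ≤ δ) (hδ1 : δ < 1)
    (hRIP : ∀ z : Fin N → ℝ, IsSparse s z →
      (1 - δ) * eucNorm z ^ 2 ≤ eucNorm (A *ᵥ z) ^ 2 ∧
        eucNorm (A *ᵥ z) ^ 2 ≤ (1 + δ) * eucNorm z ^ 2) :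
    ∀ z : Fin N → ℝ, IsSparse s z →
      ((1 - δ) / σmax) * eucNorm z ^ 2 ≤
        eucNorm ((hpd.posSemidef.sqrt)⁻¹ *ᵥ (A *ᵥ z)) ^ 2 := by
  intro z hz
  set B := hpd.posSemidef.sqrt with hB
  -- σmax > 0
  obtain ⟨i₀, hi₀⟩ := hσ₂
  have hσpos : 0 < σmax := hi₀ ▸ hpd.eigenvalues_pos i₀
  -- B is invertible
  have hBB : B * B = A * Aᵀ := sqrt_mul_self' hpd.posSemidef
  have hdet : B.det ^ 2 = (A * Aᵀ).det := by
    rw [← hBB, det_mul, sq]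
  have hdetu : IsUnit B.det := by
    refine isUnit_iff_ne_zero.mpr fun h => ?_
    have := hpd.det_pos
    rw [← hdet, h] at this
    simp at this
  have hBinv : B * B⁻¹ = 1 := mul_nonsing_inv B hdetu
  set w : Fin n → ℝ := B⁻¹ *ᵥ (A *ᵥ z) with hw
  have hBw : B *ᵥ w = A *ᵥ z := by
    rw [hw, mulVec_mulVec, hBinv, one_mulVec]
  -- ‖Az‖² = w ⬝ᵥ ((A*Aᵀ) *ᵥ w)
  have hsymm : Bᵀ = B := sqrt_isHermitian' hpd.posSemidef
  have key : (A *ᵥ z) ⬝ᵥ (A *ᵥ z) = w ⬝ᵥ ((A * Aᵀ) *ᵥ w) := by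
    rw [← hBw, dotProduct_mulVec, ← mulVec_transpose, hsymm, mulVec_mulVec, hBB,
      dotProduct_comm]
  have hquad : w ⬝ᵥ ((A * Aᵀ) *ᵥ w) ≤ σmax * (w ⬝ᵥ w) :=
    quad_le _ hpd.isHermitian σmax hσ₁ w
  have hrip := (hRIP z hz).1
  rw [enorm_sq', enorm_sq'] at hrip
  rw [enorm_sq', enorm_sq']
  rw [div_mul_eq_mul_div, div_le_iff₀ hσpos]
  calc (1 - δ) * (z ⬝ᵥ z) ≤ (A *ᵥ z) ⬝ᵥ (A *ᵥ z) := hrip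
    _ = w ⬝ᵥ ((A * Aᵀ) *ᵥ w) := key
    _ ≤ σmax * (w ⬝ᵥ w) := hquad
    _ = w ⬝ᵥ w * σmax := mul_comm _ _
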